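/- Let n = d² and q = e(1) ⊗ (1/d)·1_d ∈ R^d ⊗ R^d. If 1/d² ≤ t ≤ 1/d, then the maximum of p·q over p ∈ P(t) equals (1/d²)(1 + √((td² - 1)(d - 1))). -/

import Mathlib

set_option maxHeartbeats 1000000 in

/-- Let `n = d²` (indexed by `Fin d × Fin d`) and `q = e(1) ⊗ (1/d)·1_d`.  If
`1/d² ≤ t ≤ 1/d`, then the maximum of `p·q` over `P(t)` equals
`(1/d²)(1 + √((td² - 1)(d - 1)))`. -/
theorem stmt_13 {d : ℕ} (hd : 0 < d) (t : ℝ)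
    (ht1 : 1 / ((d : ℝ) ^ 2) ≤ t) (ht2 : t ≤ 1 / (d : ℝ))
    (q : Fin d × Fin d → ℝ)
    (hq : q = fun x => if x.1 = ⟨0, hd⟩ then 1 / (d : ℝ) else 0) :
    IsGreatest {x : ℝ | ∃ p : Fin d × Fin d → ℝ,
        ((∀ j, 0 ≤ p j) ∧ ∑ j, p j = 1 ∧ ∑ j, p j * p j ≤ t) ∧
        x = ∑ j, p j * q j}
      ((1 / ((d : ℝ) ^ 2)) * (1 + Real.sqrt ((t * (d : ℝ) ^ 2 - 1) * ((d : ℝ) - 1)))) := by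
  set D : ℝ := (d : ℝ) with hD
  have hD1 : (1:ℝ) ≤ D := by
    rw [hD]; exact_mod_cast hd
  have hD0 : (0:ℝ) < D := by linarith
  have hDm1 : (0:ℝ) ≤ D - 1 := by linarith
  have htD : 1 ≤ t * D ^ 2 := by
    rw [div_le_iff₀ (by positivity)] at ht1; linarith [ht1]
  have harg : (0:ℝ) ≤ (t * D ^ 2 - 1) * (D - 1) := by
    apply mul_nonneg <;> linarith
  set s : ℝ := Real.sqrt ((t * D ^ 2 - 1) * (D - 1)) with hsdef
  have hs0 : 0 ≤ s := Real.sqrt_nonneg _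
  have hs2 : s ^ 2 = (t * D ^ 2 - 1) * (D - 1) := Real.sq_sqrt harg
  set i0 : Fin d := ⟨0, hd⟩ with hi0
  set B : Finset (Fin d × Fin d) := Finset.univ.filter (fun j => j.1 = i0) with hBdef
  set Bc : Finset (Fin d × Fin d) := Finset.univ.filter (fun j => ¬ j.1 = i0) with hBcdef
  clear_value D s B Bc
  have hBcard : (B.card : ℝ) = D := by
    have : B = {i0} ×ˢ (Finset.univ : Finset (Fin d)) := by
      ext ⟨j1, j2⟩; simp [hBdef, Finset.mem_product, Prod.ext_iff, eq_comm]
    rw [this, Finset.card_product, Finset.card_singleton, Finset.card_univ,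
      Fintype.card_fin, one_mul]
    exact hD.symm
  have hcards : B.card + Bc.card = d * d := by
    have := Finset.card_filter_add_card_filter_not (s := (Finset.univ : Finset (Fin d × Fin d))) (p := fun j => j.1 = i0)
    simpa [hBdef, hBcdef, Fintype.card_prod] using this
  have hBccard : (Bc.card : ℝ) = D * D - D := by
    have hle : d ≤ d * d := Nat.le_mul_of_pos_left d hd
    have : Bc.card = d * d - d := by
      have hb : (B.card : ℝ) = (d : ℝ) := by rw [hBcard]; exact hD
      have hb' : B.card = d := by exact_mod_cast hb
      omega
    rw [this, hD]
    push_cast [Nat.cast_sub hle]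
    try ring
  have hsplit : ∀ f : Fin d × Fin d → ℝ, (∑ j ∈ B, f j) + (∑ j ∈ Bc, f j) = ∑ j, f j := by
    intro f
    rw [hBdef, hBcdef]
    exact Finset.sum_filter_add_sum_filter_not _ _ _
  have hqsum : ∀ p : Fin d × Fin d → ℝ, ∑ j, p j * q j = (∑ j ∈ B, p j) * (1 / D) := by
    intro p
    rw [hq]
    simp only [mul_ite, mul_zero, mul_one]
    rw [← Finset.sum_filter, Finset.sum_mul, hBdef]
  have hmemB : ∀ j ∈ B, j.1 = i0 := by
    intro j hj; rw [hBdef] at hj; exact (Finset.mem_filter.mp hj).2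
  have hmemBc : ∀ j ∈ Bc, ¬ j.1 = i0 := by
    intro j hj; rw [hBcdef] at hj; exact (Finset.mem_filter.mp hj).2
  constructor
  · -- membership
    set c : ℝ := s / (D - 1) with hcdef
    clear_value c
    have hc0 : 0 ≤ c := by rw [hcdef]; exact div_nonneg hs0 hDm1
    have hsc : c * (D - 1) = s := by
      by_cases h1 : D - 1 = 0
      · have : s = 0 := by rw [hsdef, h1, mul_zero, Real.sqrt_zero]
        rw [h1, mul_zero, this]
      · rw [hcdef]; exact div_mul_cancel₀ s h1
    have hkey : c ^ 2 * (D - 1) = t * D ^ 2 - 1 := by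
      by_cases h1 : D - 1 = 0
      · have hD1' : D = 1 := by linarith
        have ht1' : (1:ℝ) ≤ t := by nlinarith [htD]
        have ht2' : t ≤ 1 := by rw [le_div_iff₀ hD0] at ht2; nlinarith
        rw [h1, mul_zero, hD1']
        nlinarith
      · have : c ^ 2 = (t * D ^ 2 - 1) / (D - 1) := by
          rw [hcdef, div_pow, hs2]
          field_simp
        rw [this]; field_simp
    have hc1 : c ≤ 1 := by
      by_cases h1 : D - 1 = 0
      · rw [hcdef, h1, div_zero]; norm_num
      · have hDm1' : 0 < D - 1 := lt_of_le_of_ne hDm1 (Ne.symm h1)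
        rw [hcdef, div_le_one hDm1']
        have : t * D ^ 2 - 1 ≤ D - 1 := by
          rw [le_div_iff₀ hD0] at ht2; nlinarith
        calc s ≤ Real.sqrt ((D - 1) * (D - 1)) :=
              hsdef ▸ Real.sqrt_le_sqrt (mul_le_mul_of_nonneg_right this hDm1)
          _ = D - 1 := Real.sqrt_mul_self hDm1
    set a : ℝ := (1 + c * (D - 1)) / D ^ 2 with hadef
    set b : ℝ := (1 - c) / D ^ 2 with hbdef
    clear_value a b
    have ha0 : 0 ≤ a := by
      rw [hadef]
      apply div_nonneg _ (by positivity)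
      have := mul_nonneg hc0 hDm1
      linarith
    have hb0 : 0 ≤ b := by
      rw [hbdef]
      apply div_nonneg _ (by positivity)
      linarith
    refine ⟨fun j => if j.1 = i0 then a else b, ⟨fun j => ?_, ?_, ?_⟩, ?_⟩
    · dsimp only; split <;> assumption
    · rw [← hsplit]
      have h1 : ∑ j ∈ B, (if j.1 = i0 then a else b) = D * a := by
        rw [Finset.sum_congr rfl (fun j hj => if_pos (hmemB j hj)),
          Finset.sum_const, nsmul_eq_mul, hBcard]
      have h2 : ∑ j ∈ Bc, (if j.1 = i0 then a else b) = (D * D - D) * b := by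
        rw [Finset.sum_congr rfl (fun j hj => if_neg (hmemBc j hj)),
          Finset.sum_const, nsmul_eq_mul, hBccard]
      rw [h1, h2, hadef, hbdef]
      field_simp
      ring
    · rw [← hsplit]
      have h1 : ∑ j ∈ B, ((if j.1 = i0 then a else b) * (if j.1 = i0 then a else b)) = D * (a * a) := by
        rw [Finset.sum_congr rfl (fun j hj => by rw [if_pos (hmemB j hj)]),
          Finset.sum_const, nsmul_eq_mul, hBcard]
      have h2 : ∑ j ∈ Bc, ((if j.1 = i0 then a else b) * (if j.1 = i0 then a else b)) = (D * D - D) * (b * b) := by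
        rw [Finset.sum_congr rfl (fun j hj => by rw [if_neg (hmemBc j hj)]),
          Finset.sum_const, nsmul_eq_mul, hBccard]
      rw [h1, h2, hadef, hbdef]
      have hexp : D * ((1 + c * (D - 1)) / D ^ 2 * ((1 + c * (D - 1)) / D ^ 2)) +
          (D * D - D) * ((1 - c) / D ^ 2 * ((1 - c) / D ^ 2)) =
          (1 + c ^ 2 * (D - 1)) / D ^ 2 := by
        field_simp
        ring
      rw [hexp, hkey]
      rw [div_le_iff₀ (by positivity)]
      ring_nf
      nlinarith
    · rw [hqsum]
      have h1 : ∑ j ∈ B, (if j.1 = i0 then a else b) = D * a := by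
        rw [Finset.sum_congr rfl (fun j hj => if_pos (hmemB j hj)),
          Finset.sum_const, nsmul_eq_mul, hBcard]
      rw [h1, hadef, hsc]
      field_simp
  · -- upper bound
    rintro x ⟨p, ⟨hp0, hp1, hp2⟩, hx⟩
    set S1 : ℝ := ∑ j ∈ B, p j with hS1
    have hS2 : ∑ j ∈ Bc, p j = 1 - S1 := by
      have := hsplit p; linarith [hp1]
    set T1 : ℝ := ∑ j ∈ B, p j * p j with hT1
    set T2 : ℝ := ∑ j ∈ Bc, p j * p j with hT2
    have hT : T1 + T2 ≤ t := by
      have := hsplit (fun j => p j * p j); rw [hT1, hT2, this]; exact hp2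
    have hCS1 : S1 ^ 2 ≤ D * T1 := by
      have := sq_sum_le_card_mul_sum_sq (s := B) (f := p)
      simp_rw [sq] at this ⊢
      calc S1 * S1 = (∑ j ∈ B, p j) * (∑ j ∈ B, p j) := rfl
        _ ≤ (B.card : ℝ) * ∑ j ∈ B, p j * p j := by
            have h := sq_sum_le_card_mul_sum_sq (s := B) (f := p)
            simpa [sq] using h
        _ = D * T1 := by rw [hBcard]
    have hCS2 : (1 - S1) ^ 2 ≤ (D * D - D) * T2 := by
      calc (1 - S1) ^ 2 = (∑ j ∈ Bc, p j) ^ 2 := by rw [hS2]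
        _ ≤ (Bc.card : ℝ) * ∑ j ∈ Bc, p j ^ 2 := sq_sum_le_card_mul_sum_sq
        _ = (D * D - D) * T2 := by rw [hBccard]; simp_rw [sq]; rw [hT2]
    have hT1nn : 0 ≤ T1 := Finset.sum_nonneg fun j _ => mul_nonneg (hp0 j) (hp0 j)
    have key : (D * S1 - 1) ^ 2 ≤ s ^ 2 := by
      have hA' : D * (D - 1) * S1 ^ 2 ≤ D ^ 2 * (D - 1) * T1 := by nlinarith [mul_le_mul_of_nonneg_left hCS1 (mul_nonneg hD0.le hDm1)]
      have hB' : D * (1 - S1) ^ 2 ≤ D ^ 2 * (D - 1) * T2 := by nlinarith [mul_le_mul_of_nonneg_left hCS2 hD0.le]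
      have hT' : D ^ 2 * (D - 1) * (T1 + T2) ≤ D ^ 2 * (D - 1) * t :=
        mul_le_mul_of_nonneg_left hT (by positivity)
      nlinarith [hA', hB', hT', hs2]
    have hDS1 : D * S1 - 1 ≤ s := by nlinarith [key, hs0]
    rw [hx, hqsum]
    calc S1 * (1 / D) = (D * S1) / D ^ 2 := by field_simp
      _ ≤ (1 + s) / D ^ 2 := by gcongr ?_ / _; linarith
      _ = 1 / D ^ 2 * (1 + s) := by ring
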